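/- The complete list of parameter tuples (y,v,b,r,k,λ) with λ ≥ 2, r > k > λ > 1, gcd considerations aside, satisfying 2 ≤ y ≤ 10, v < (k²−k)/(y−1), r(k−1)=λ(v−1), (y−1)(r−1)=(k−1)(λ−1), y|k, y|(r−λ), b=vr/k integral, for v = 12 with r/gcd(r,λ) dividing 11, is exactly {(3,12,22,11,6,5)}; and for v = 22 with r/gcd(r,λ) dividing 21, is exactly {(2,22,77,21,6,5)}. -/
import Mathlib


/-- Feasible quasi-symmetric parameter tuples (y,v,b,r,k,λ): for v = 12 with
r/gcd(r,λ) ∣ 11 the unique solution is (3,12,22,11,6,5); for v = 22 with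
r/gcd(r,λ) ∣ 21 the unique solution is (2,22,77,21,6,5). -/
theorem stmt19 :
    (∀ y b r k lam : ℕ,
      (2 ≤ y ∧ y ≤ 10 ∧ 1 < lam ∧ lam < k ∧ k < r ∧
        (12 : ℚ) < ((k : ℚ) ^ 2 - k) / ((y : ℚ) - 1) ∧
        r * (k - 1) = lam * (12 - 1) ∧
        (y - 1) * (r - 1) = (k - 1) * (lam - 1) ∧
        y ∣ k ∧ y ∣ (r - lam) ∧
        b * k = 12 * r ∧
        (r / Nat.gcd r lam) ∣ 11) ↔
      (y = 3 ∧ b = 22 ∧ r = 11 ∧ k = 6 ∧ lam = 5)) ∧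
    (∀ y b r k lam : ℕ,
      (2 ≤ y ∧ y ≤ 10 ∧ 1 < lam ∧ lam < k ∧ k < r ∧
        (22 : ℚ) < ((k : ℚ) ^ 2 - k) / ((y : ℚ) - 1) ∧
        r * (k - 1) = lam * (22 - 1) ∧
        (y - 1) * (r - 1) = (k - 1) * (lam - 1) ∧
        y ∣ k ∧ y ∣ (r - lam) ∧
        b * k = 22 * r ∧
        (r / Nat.gcd r lam) ∣ 21) ↔
      (y = 2 ∧ b = 77 ∧ r = 21 ∧ k = 6 ∧ lam = 5)) := by
  constructor
  · intro y b r k lam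
    constructor
    · rintro ⟨hy2, hy10, hlam, hlk, hkr, -, heq1, heq2, hyk, hyr, hb, -⟩
      have h1 : lam ≤ k - 1 := by omega
      have h2 : r * (k - 1) ≤ 11 * (k - 1) := by
        rw [heq1]; calc lam * 11 = 11 * lam := Nat.mul_comm _ _
          _ ≤ 11 * (k - 1) := Nat.mul_le_mul_left 11 h1
      have hr : r ≤ 11 := Nat.le_of_mul_le_mul_right h2 (by omega)
      have hk3 : 3 ≤ k := by omega
      have hr4 : 4 ≤ r := by omega
      interval_cases r <;> interval_cases k <;> interval_cases y <;> omega
    · rintro ⟨rfl, rfl, rfl, rfl, rfl⟩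
      refine ⟨by norm_num, by norm_num, by norm_num, by norm_num, by norm_num,
        by norm_num, by norm_num, by norm_num, by norm_num, by norm_num,
        by norm_num, by norm_num⟩
  · intro y b r k lam
    constructor
    · rintro ⟨hy2, hy10, hlam, hlk, hkr, -, heq1, heq2, hyk, hyr, hb, -⟩
      have h1 : lam ≤ k - 1 := by omega
      have h2 : r * (k - 1) ≤ 21 * (k - 1) := by
        rw [heq1]; calc lam * 21 = 21 * lam := Nat.mul_comm _ _
          _ ≤ 21 * (k - 1) := Nat.mul_le_mul_left 21 h1
      have hr : r ≤ 21 := Nat.le_of_mul_le_mul_right h2 (by omega)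
      have hk3 : 3 ≤ k := by omega
      have hr4 : 4 ≤ r := by omega
      interval_cases r <;> interval_cases k <;> interval_cases y <;> omega
    · rintro ⟨rfl, rfl, rfl, rfl, rfl⟩
      refine ⟨by norm_num, by norm_num, by norm_num, by norm_num, by norm_num,
        by norm_num, by norm_num, by norm_num, by norm_num, by norm_num,
        by norm_num, by norm_num⟩
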